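/- Let f : 𝔹 → 𝔹 be a regular homeomorphism of Sobolev class W^{1,1}_loc possessing Lusin's (N)-property, and let p > 1. Then for almost all r ∈ [0,1], S'(r) ≥ L(r)^p / ((2πr)^{p-1} d_p(r)), where L(r) denotes the length of the curve f(re^{iθ}), 0 ≤ θ ≤ 2π. -/

import Mathlib

open MeasureTheory Filter Metric Set
open scoped Real Topology
open scoped ENNReal NNReal

noncomputable section

/-- The Jacobian determinant of `f : ℂ → ℂ` at `z` (via the a.e. existing total derivative). -/
def jacobian (f : ℂ → ℂ) (z : ℂ) : ℝ := (fderiv ℝ f z).det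

/-- The angular partial derivative `f_θ` of `f` at `z = r e^{iθ}`
(the derivative of `θ ↦ f (r e^{iθ})`). -/
def angDeriv (f : ℂ → ℂ) (z : ℂ) : ℂ := fderiv ℝ f z (Complex.I * z)

/-- The radial partial derivative `f_r` of `f` at `z = r e^{iθ}`. -/
def radDeriv (f : ℂ → ℂ) (z : ℂ) : ℂ := fderiv ℝ f z (z / ((‖z‖ : ℝ) : ℂ))

/-- The `p`-angular dilatation `D_p(z) = |f_θ|^p / (r^p J_f)` of `f` at `z`
with respect to the origin. -/
def angDil (f : ℂ → ℂ) (p : ℝ) (z : ℂ) : ℝ :=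
  ‖angDeriv f z‖ ^ p / (‖z‖ ^ p * jacobian f z)

/-- `q_p(r) = ((1/(2πr)) ∫_{γ_r} Q^{1/(p-1)} |dz|)^{p-1}`, written via the arclength
parametrization of the circle `γ_r`. -/
def circMean (Q : ℂ → ℝ) (p : ℝ) (r : ℝ) : ℝ :=
  ((2 * Real.pi)⁻¹ * ∫ θ in (0:ℝ)..(2 * Real.pi),
    Q ((r : ℂ) * Complex.exp (Complex.I * (θ : ℂ))) ^ (1 / (p - 1))) ^ (p - 1)

/-- `d_p(r)`: the quantity `q_p(r)` for `Q = D_p`. -/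
def dMean (f : ℂ → ℂ) (p : ℝ) (r : ℝ) : ℝ := circMean (angDil f p) p r

/-- `S(r) = m(f(B_r))`, the area of the image of the disc of radius `r`. -/
def areaFn (f : ℂ → ℂ) (r : ℝ) : ℝ := (volume (f '' ball (0:ℂ) r)).toReal

/-- `L(r)`: the length of the curve `θ ↦ f(re^{iθ})`, `0 ≤ θ ≤ 2π`. -/
def curveLen (f : ℂ → ℂ) (r : ℝ) : ℝ :=
  ∫ θ in (0:ℝ)..(2 * Real.pi),
    ‖angDeriv f ((r : ℂ) * Complex.exp (Complex.I * (θ : ℂ)))‖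

/-- A regular homeomorphism of the unit disc onto itself of Sobolev class `W^{1,1}_loc`
possessing Lusin's (N)-property: a sense-preserving homeomorphism `𝔹 → 𝔹`,
differentiable a.e. with (positive, by sense-preservation) non-vanishing Jacobian a.e.,
with locally integrable differential, mapping null subsets of `𝔹` onto null sets. -/
def IsRegularHomeo (f : ℂ → ℂ) : Prop :=
  (∃ e : (ball (0:ℂ) 1) ≃ₜ (ball (0:ℂ) 1), ∀ z : (ball (0:ℂ) 1), (e z : ℂ) = f z) ∧
  (∀ᵐ z ∂(volume.restrict (ball (0:ℂ) 1)), DifferentiableAt ℝ f z ∧ 0 < jacobian f z) ∧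
  LocallyIntegrableOn (fun z => ‖fderiv ℝ f z‖) (ball (0:ℂ) 1) volume ∧
  (∀ s, s ⊆ ball (0:ℂ) 1 → volume s = 0 → volume (f '' s) = 0)

private lemma measurable_jacobian' (f : ℂ → ℂ) : Measurable (jacobian f) :=
  ContinuousLinearMap.continuous_det.measurable.comp (measurable_fderiv ℝ f)

private lemma measurable_angDeriv' (f : ℂ → ℂ) : Measurable (angDeriv f) := by
  have h1 : Measurable (fun z : ℂ => (fderiv ℝ f z, Complex.I * z)) :=
    (measurable_fderiv ℝ f).prodMk (measurable_const.mul measurable_id)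
  exact (isBoundedBilinearMap_apply (𝕜 := ℝ) (E := ℂ) (F := ℂ)).continuous.measurable.comp h1

private lemma polar_symm_eq (s θ : ℝ) :
    Complex.polarCoord.symm (s, θ) = (s:ℂ) * Complex.exp (Complex.I * (θ:ℂ)) := by
  rw [Complex.polarCoord_symm_apply, mul_comm Complex.I, Complex.exp_mul_I]
  simp [Complex.ofReal_cos, Complex.ofReal_sin]

private lemma abs_polar {s : ℝ} (θ : ℝ) (hs : 0 ≤ s) :
    ‖Complex.polarCoord.symm (s, θ)‖ = s := by
  rw [Complex.norm_polarCoord_symm]; exact abs_of_nonneg hs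

private lemma polar_bridge (p : ℝ × ℝ) :
    Complex.measurableEquivRealProd.symm (polarCoord.symm p) = Complex.polarCoord.symm p := by
  have h : Complex.measurableEquivRealProd.symm (polarCoord.symm p)
      = Complex.equivRealProd.symm (polarCoord.symm p) := rfl
  rw [h, polarCoord_symm_apply, Complex.equivRealProd_symm_apply, Complex.polarCoord_symm_apply]
  push_cast
  ring

private lemma continuous_CpolarSymm : Continuous (fun p : ℝ × ℝ => Complex.polarCoord.symm p) := by
  have h : (fun p : ℝ × ℝ => Complex.polarCoord.symm p)
      = fun p => (p.1 : ℂ) * (↑(Real.cos p.2) + ↑(Real.sin p.2) * Complex.I) := by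
    funext p; exact Complex.polarCoord_symm_apply p
  rw [h]; fun_prop

private lemma injOn_Cpolar {r : ℝ} :
    InjOn (fun p : ℝ × ℝ => Complex.polarCoord.symm p) (Ioo 0 r ×ˢ Ioo 0 (2*π)) := by
  rintro ⟨s₁, θ₁⟩ ⟨hs₁, hθ₁⟩ ⟨s₂, θ₂⟩ ⟨hs₂, hθ₂⟩ h
  simp only [mem_Ioo] at hs₁ hθ₁ hs₂ hθ₂
  have h : Complex.polarCoord.symm (s₁, θ₁) = Complex.polarCoord.symm (s₂, θ₂) := h
  have habs : s₁ = s₂ := by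
    have := congrArg (fun z : ℂ => ‖z‖) h
    rwa [abs_polar θ₁ hs₁.1.le, abs_polar θ₂ hs₂.1.le] at this
  subst habs
  have hs0 : (s₁ : ℂ) ≠ 0 := Complex.ofReal_ne_zero.mpr hs₁.1.ne'
  rw [polar_symm_eq, polar_symm_eq] at h
  have hexp : Complex.exp (Complex.I * θ₁) = Complex.exp (Complex.I * θ₂) :=
    mul_left_cancel₀ hs0 h
  have h1 : Complex.exp (Complex.I * θ₁ - Complex.I * θ₂) = 1 := by
    rw [Complex.exp_sub, hexp, div_self (Complex.exp_ne_zero _)]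
  obtain ⟨n, hn⟩ := Complex.exp_eq_one_iff.mp h1
  have hn' : (θ₁ : ℂ) - θ₂ = n * (2 * π) := by
    have : Complex.I * (θ₁ - θ₂) = Complex.I * (n * (2 * π)) := by
      rw [mul_sub, hn]; ring
    exact mul_left_cancel₀ Complex.I_ne_zero this
  have hnr : θ₁ - θ₂ = n * (2 * π) := by exact_mod_cast hn'
  have hpi : (0:ℝ) < 2 * π := by positivity
  have hb : |(n : ℝ)| < 1 := by
    rw [abs_lt]
    constructor <;> nlinarith [hθ₁.1, hθ₁.2, hθ₂.1, hθ₂.2]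
  have hn0 : n = 0 := by
    have : |n| < 1 := by exact_mod_cast (by rwa [← Int.cast_abs] at hb : ((|n| : ℤ) : ℝ) < 1)
    exact Int.abs_lt_one_iff.mp this
  subst hn0
  simp only [Int.cast_zero, zero_mul] at hnr
  have : θ₁ = θ₂ := by linarith
  simp [this]

private lemma polar_image_mem {r : ℝ} {z : ℂ} (hz : z ∈ ball (0:ℂ) r) (him : z.im ≠ 0) :
    z ∈ (fun p : ℝ × ℝ => Complex.polarCoord.symm p) '' (Ioo 0 r ×ˢ Ioo 0 (2*π)) := by
  have hz0 : z ≠ 0 := fun h => him (by simp [h])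
  have habs : 0 < ‖z‖ := norm_pos_iff.mpr hz0
  have hlt : ‖z‖ < r := by
    rwa [mem_ball_zero_iff] at hz
  have harg1 : -π < z.arg := Complex.neg_pi_lt_arg z
  have harg2 : z.arg ≤ π := Complex.arg_le_pi z
  have hsin : Real.sin z.arg ≠ 0 := by
    rw [Complex.sin_arg]
    exact div_ne_zero him habs.ne'
  have harg0 : z.arg ≠ 0 := fun h => hsin (by simp [h])
  have hargpi : z.arg ≠ π := fun h => hsin (by simp [h])
  have hpi : (0:ℝ) < π := Real.pi_pos
  have key : ∀ θ : ℝ, Real.cos θ = Real.cos z.arg → Real.sin θ = Real.sin z.arg →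
      Complex.polarCoord.symm (‖z‖, θ) = z := by
    intro θ hc hs
    rw [Complex.polarCoord_symm_apply, hc, hs]
    have := Complex.norm_mul_cos_add_sin_mul_I z
    rw [← this]
    simp [Complex.ofReal_cos, Complex.ofReal_sin]
  rcases lt_or_gt_of_ne harg0 with hneg | hpos
  · refine ⟨(‖z‖, z.arg + 2*π), ⟨⟨habs, hlt⟩, ⟨show (0:ℝ) < z.arg + 2*π by linarith, show z.arg + 2*π < 2*π by linarith⟩⟩, ?_⟩
    exact key _ (Real.cos_add_two_pi _) (Real.sin_add_two_pi _)
  · refine ⟨(‖z‖, z.arg), ⟨⟨habs, hlt⟩, ⟨show (0:ℝ) < z.arg from hpos, show z.arg < 2*π by linarith [lt_of_le_of_ne harg2 hargpi]⟩⟩, ?_⟩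
    exact key _ rfl rfl

private lemma null_horizontal : (volume : Measure (ℝ × ℝ)) {q : ℝ × ℝ | q.2 = 0} = 0 := by
  have h : {q : ℝ × ℝ | q.2 = 0} = (univ : Set ℝ) ×ˢ ({0} : Set ℝ) := by
    ext ⟨x, y⟩; simp [eq_comm]
  rw [h, Measure.volume_eq_prod, Measure.prod_prod]
  simp


private lemma lintegral_ball_polar (g : ℂ → ℝ≥0∞) (hg : Measurable g) {r : ℝ} (hr : 0 < r) :
    ∫⁻ z in ball (0:ℂ) r, g z
      = ∫⁻ s in Ioo (0:ℝ) r, ∫⁻ θ in Ioo (0:ℝ) (2*π),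
          ENNReal.ofReal s * g (Complex.polarCoord.symm (s, θ)) := by
  set eqv := Complex.measurableEquivRealProd with heqv
  set B : Set (ℝ × ℝ) := Ioo (0:ℝ) r ×ˢ Ioo (0:ℝ) (2*π) with hB
  have hBmeas : MeasurableSet B := measurableSet_Ioo.prod measurableSet_Ioo
  set g' : ℝ × ℝ → ℝ≥0∞ := fun q => g (eqv.symm q) with hg'
  have hg'meas : Measurable g' := hg.comp eqv.symm.measurable
  have hEmeas : MeasurableSet (eqv '' ball (0:ℂ) r) := by
    rw [MeasurableEquiv.image_eq_preimage_symm]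
    exact eqv.symm.measurable measurableSet_ball
  -- step 1 : transfer to ℝ × ℝ
  have step1 : ∫⁻ z in ball (0:ℂ) r, g z = ∫⁻ q in eqv '' ball (0:ℂ) r, g' q := by
    have hmap : (volume : Measure (ℝ × ℝ)).restrict (eqv '' ball (0:ℂ) r)
        = Measure.map eqv (volume.restrict (ball (0:ℂ) r)) := by
      rw [← Complex.volume_preserving_equiv_real_prod.map_eq,
        Measure.restrict_map eqv.measurable hEmeas,
        Set.preimage_image_eq _ eqv.injective]
    rw [hmap, lintegral_map_equiv g' eqv]
    refine lintegral_congr fun z => ?_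
    simp [hg']
  -- step 2 : image a.e. equality
  have himg : (fun p : ℝ × ℝ => polarCoord.symm p) '' B =ᵐ[volume] eqv '' ball (0:ℂ) r := by
    rw [Filter.eventuallyEq_set]
    have hsub1 : (fun p : ℝ × ℝ => polarCoord.symm p) '' B ⊆ eqv '' ball (0:ℂ) r := by
      rintro q ⟨p, hp, rfl⟩
      refine ⟨Complex.polarCoord.symm p, ?_, ?_⟩
      · rw [mem_ball_zero_iff, abs_polar p.2 hp.1.1.le]
        exact hp.1.2
      · rw [← polar_bridge p]
        exact eqv.apply_symm_apply _
    have hsub2 : eqv '' ball (0:ℂ) r \ (fun p : ℝ × ℝ => polarCoord.symm p) '' B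
        ⊆ {q : ℝ × ℝ | q.2 = 0} := by
      rintro q ⟨⟨z, hz, rfl⟩, hq⟩
      by_contra him
      have him' : z.im ≠ 0 := by
        simpa [heqv, Complex.measurableEquivRealProd] using him
      obtain ⟨p, hp, hpz⟩ := polar_image_mem hz him'
      refine hq ⟨p, hp, ?_⟩
      have hz' : eqv.symm (polarCoord.symm p) = z := by rw [polar_bridge p]; exact hpz
      calc (fun p : ℝ × ℝ => polarCoord.symm p) p
          = eqv (eqv.symm (polarCoord.symm p)) := (eqv.apply_symm_apply _).symm
        _ = eqv z := by rw [hz']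
    have h2 : volume ((eqv '' ball (0:ℂ) r) \ ((fun p : ℝ × ℝ => polarCoord.symm p) '' B)) = 0 :=
      measure_mono_null hsub2 null_horizontal
    have h1 : volume (((fun p : ℝ × ℝ => polarCoord.symm p) '' B) \ (eqv '' ball (0:ℂ) r)) = 0 := by
      rw [Set.diff_eq_empty.mpr hsub1]; exact measure_empty
    filter_upwards [measure_eq_zero_iff_ae_notMem.mp h1, measure_eq_zero_iff_ae_notMem.mp h2] with q hq1 hq2
    constructor
    · intro h; by_contra h'; exact hq1 ⟨h, h'⟩
    · intro h; by_contra h'; exact hq2 ⟨h, h'⟩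
  -- step 3 : change of variables
  set Bd : ℝ × ℝ → ℝ × ℝ →L[ℝ] ℝ × ℝ := fun p =>
    LinearMap.toContinuousLinearMap (Matrix.toLin (Module.Basis.finTwoProd ℝ) (Module.Basis.finTwoProd ℝ)
      !![Real.cos p.2, -p.1 * Real.sin p.2; Real.sin p.2, p.1 * Real.cos p.2]) with hBd
  have hBd_det : ∀ p, (Bd p).det = p.1 := by
    intro p
    conv_rhs => rw [← one_mul p.1, ← Real.cos_sq_add_sin_sq p.2]
    simp only [hBd, neg_mul, LinearMap.det_toContinuousLinearMap, LinearMap.det_toLin,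
      Matrix.det_fin_two_of, sub_neg_eq_add]
    ring
  have hderiv : ∀ p ∈ B, HasFDerivWithinAt (fun p : ℝ × ℝ => polarCoord.symm p) (Bd p) B p :=
    fun p _ => (hasFDerivAt_polarCoord_symm p).hasFDerivWithinAt
  have hinj : InjOn (fun p : ℝ × ℝ => polarCoord.symm p) B := by
    intro p hp p' hp' h
    apply injOn_Cpolar (r := r) hp hp'
    have h' : polarCoord.symm p = polarCoord.symm p' := h
    show Complex.polarCoord.symm p = Complex.polarCoord.symm p'
    rw [← polar_bridge p, ← polar_bridge p', h']
  have step3 : ∫⁻ q in (fun p : ℝ × ℝ => polarCoord.symm p) '' B, g' q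
      = ∫⁻ p in B, ENNReal.ofReal |(Bd p).det| * g' (polarCoord.symm p) :=
    lintegral_image_eq_lintegral_abs_det_fderiv_mul volume hBmeas hderiv hinj g'
  -- step 4 integrand simplify
  have step4 : ∫⁻ p in B, ENNReal.ofReal |(Bd p).det| * g' (polarCoord.symm p)
      = ∫⁻ p in B, ENNReal.ofReal p.1 * g (Complex.polarCoord.symm p) := by
    refine setLIntegral_congr_fun_ae hBmeas (ae_of_all _ fun p hp => ?_)
    rw [hBd_det p, abs_of_pos hp.1.1]
    show ENNReal.ofReal p.1 * g (Complex.measurableEquivRealProd.symm (polarCoord.symm p)) = _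
    rw [polar_bridge p]
  -- step 5 Fubini
  have step5 : ∫⁻ p in B, ENNReal.ofReal p.1 * g (Complex.polarCoord.symm p)
      = ∫⁻ s in Ioo (0:ℝ) r, ∫⁻ θ in Ioo (0:ℝ) (2*π),
          ENNReal.ofReal s * g (Complex.polarCoord.symm (s, θ)) := by
    have hFmeas : Measurable (fun p : ℝ × ℝ => ENNReal.ofReal p.1 * g (Complex.polarCoord.symm p)) :=
      (measurable_fst.ennreal_ofReal).mul (hg.comp continuous_CpolarSymm.measurable)
    rw [hB, Measure.volume_eq_prod, ← Measure.prod_restrict]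
    exact lintegral_prod _ hFmeas.aemeasurable
  rw [step1, ← setLIntegral_congr himg, step3, step4, step5]

private lemma primitive_hasDerivAt_ae (w : ℝ → ℝ) (hmeas : Measurable w) (h0 : ∀ s, 0 ≤ w s)
    (hint : Integrable w volume) :
    ∀ᵐ x, HasDerivAt (fun u => ∫ s in Iic u, w s) (w x) x := by
  set H : ℝ → ℝ := fun u => ∫ s in Iic u, w s with hHdef
  have hsplit : ∀ a b : ℝ, a ≤ b → H b = H a + ∫ s in Ioc a b, w s := by
    intro a b hab
    rw [hHdef]
    simp only
    rw [← Iic_union_Ioc_eq_Iic hab, setIntegral_union (Set.Iic_disjoint_Ioc le_rfl)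
      measurableSet_Ioc hint.integrableOn hint.integrableOn]
  have hmono : Monotone H := by
    intro a b hab
    rw [hsplit a b hab]
    have : 0 ≤ ∫ s in Ioc a b, w s :=
      setIntegral_nonneg measurableSet_Ioc fun x _ => h0 x
    linarith
  have hcont : Continuous H := by
    have hfe : ∀ u, H u = H 0 + ∫ s in (0:ℝ)..u, w s := by
      intro u
      rcases le_or_gt 0 u with h | h
      · rw [intervalIntegral.integral_of_le h, ← hsplit 0 u h]
      · rw [intervalIntegral.integral_of_ge h.le]
        have := hsplit u 0 h.le
        rw [MeasureTheory.integral_Ioc_eq_integral_Ioo] at this ⊢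
        linarith
    have : Continuous fun u => H 0 + ∫ s in (0:ℝ)..u, w s :=
      continuous_const.add (intervalIntegral.continuous_primitive
        (fun a b => hint.intervalIntegrable) 0)
    exact (funext hfe : H = _) ▸ this
  have hst : hmono.stieltjesFunction.measure = volume.withDensity (fun s => ENNReal.ofReal (w s)) := by
    refine Measure.ext_of_Ioc _ _ fun a b hab => ?_
    have hsf : ∀ x, hmono.stieltjesFunction x = H x := by
      intro x
      rw [Monotone.stieltjesFunction_eq]
      exact rightLim_eq_of_tendsto
        hcont.continuousAt.continuousWithinAt
    rw [StieltjesFunction.measure_Ioc, hsf, hsf, withDensity_apply _ measurableSet_Ioc,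
      ← ofReal_integral_eq_lintegral_ofReal hint.integrableOn (ae_of_all _ h0),
      hsplit a b hab.le, add_sub_cancel_left]
  have hrn := Measure.rnDeriv_withDensity volume
    (hmeas.ennreal_ofReal : Measurable fun s => ENNReal.ofReal (w s))
  filter_upwards [hmono.ae_hasDerivAt, hrn] with x hx hx2
  rw [hst, hx2, ENNReal.toReal_ofReal (h0 x)] at hx
  exact hx

/-- `S'(r) ≥ L(r)^p / ((2πr)^{p-1} d_p(r))` for a.a. `r ∈ [0,1]`. -/
theorem area_deriv_length_bound (f : ℂ → ℂ) (hf : IsRegularHomeo f) (p : ℝ) (hp : 1 < p) :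
    ∀ᵐ r ∂(volume.restrict (Icc (0:ℝ) 1)),
      deriv (areaFn f) r ≥
        curveLen f r ^ p / ((2 * Real.pi * r) ^ (p - 1) * dMean f p r) := by
  obtain ⟨⟨e, he⟩, hae, -, hN⟩ := hf
  have hpi : (0:ℝ) < π := Real.pi_pos
  have hp0 : (0:ℝ) < p := lt_trans one_pos hp
  have hp1 : p - 1 ≠ 0 := sub_ne_zero.mpr hp.ne'
  set G : Set ℂ := ball (0:ℂ) 1 ∩ {z | DifferentiableAt ℝ f z ∧ 0 < jacobian f z} with hGdef
  have hGmeas : MeasurableSet G := by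
    apply measurableSet_ball.inter
    rw [Set.setOf_and]
    exact (measurableSet_of_differentiableAt ℝ f).inter
      (measurableSet_lt measurable_const (measurable_jacobian' f))
  have hnull : volume (ball (0:ℂ) 1 \ G) = 0 := by
    have h1 : ∀ᵐ z, z ∈ ball (0:ℂ) 1 → (DifferentiableAt ℝ f z ∧ 0 < jacobian f z) :=
      (ae_restrict_iff' measurableSet_ball).mp hae
    rw [ae_iff] at h1
    refine measure_mono_null ?_ h1
    intro z hz
    simp only [mem_diff, hGdef, mem_inter_iff, mem_setOf_eq, not_and] at hz ⊢
    tauto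
  have hmapsto : ∀ z ∈ ball (0:ℂ) 1, f z ∈ ball (0:ℂ) 1 := fun z hz => by
    rw [← he ⟨z, hz⟩]; exact (e ⟨z, hz⟩).2
  have hinj : InjOn f (ball (0:ℂ) 1) := by
    intro a ha b hb hab
    have h1 : e ⟨a, ha⟩ = e ⟨b, hb⟩ := Subtype.ext (by rw [he, he]; exact hab)
    exact congrArg Subtype.val (e.injective h1)
  set Jt : ℂ → ℝ := G.indicator (jacobian f) with hJt
  have hJtmeas : Measurable Jt := (measurable_jacobian' f).indicator hGmeas
  have hJtnn : ∀ z, 0 ≤ Jt z := by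
    intro z; rw [hJt]
    by_cases h : z ∈ G
    · rw [Set.indicator_of_mem h]; exact (h.2.2).le
    · rw [Set.indicator_of_notMem h]
  have harea : ∀ r : ℝ, 0 < r → r ≤ 1 →
      volume (f '' ball (0:ℂ) r) = ∫⁻ z in ball (0:ℂ) r, ENNReal.ofReal (Jt z) := by
    intro r hr0 hr1
    have hball : ball (0:ℂ) r ⊆ ball (0:ℂ) 1 := ball_subset_ball hr1
    have hSmeas : MeasurableSet (G ∩ ball (0:ℂ) r) := hGmeas.inter measurableSet_ball
    have h1 : ∫⁻ z in ball (0:ℂ) r, ENNReal.ofReal (Jt z)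
        = ∫⁻ z in G ∩ ball (0:ℂ) r, ENNReal.ofReal (jacobian f z) := by
      have hind : (fun z => ENNReal.ofReal (Jt z))
          = G.indicator (fun z => ENNReal.ofReal (jacobian f z)) := by
        funext z
        rw [hJt]
        by_cases h : z ∈ G <;>
          simp [Set.indicator_of_mem, Set.indicator_of_notMem, h]
      rw [hind, lintegral_indicator hGmeas, Measure.restrict_restrict hGmeas]
    have h2 : ∫⁻ z in G ∩ ball (0:ℂ) r, ENNReal.ofReal (jacobian f z)
        = ∫⁻ z in G ∩ ball (0:ℂ) r, ENNReal.ofReal |(fderiv ℝ f z).det| := by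
      refine setLIntegral_congr_fun_ae hSmeas (ae_of_all _ fun z hz => ?_)
      exact congrArg ENNReal.ofReal (abs_of_pos hz.1.2.2).symm
    have h3 : ∫⁻ z in G ∩ ball (0:ℂ) r, ENNReal.ofReal |(fderiv ℝ f z).det|
        = volume (f '' (G ∩ ball (0:ℂ) r)) :=
      lintegral_abs_det_fderiv_eq_addHaar_image volume hSmeas
        (fun z hz => (hz.1.2.1).hasFDerivAt.hasFDerivWithinAt)
        (hinj.mono fun z hz => hz.1.1)
    have h4 : volume (f '' ball (0:ℂ) r) = volume (f '' (G ∩ ball (0:ℂ) r)) := by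
      refine le_antisymm ?_ (measure_mono (image_mono inter_subset_right))
      have hcover : f '' ball (0:ℂ) r ⊆ f '' (G ∩ ball (0:ℂ) r) ∪ f '' (ball (0:ℂ) r \ G) := by
        rw [← image_union]
        apply image_mono
        intro z hz
        by_cases h : z ∈ G
        · exact Or.inl ⟨h, hz⟩
        · exact Or.inr ⟨hz, h⟩
      refine (measure_mono hcover).trans ?_
      have hsub : ball (0:ℂ) r \ G ⊆ ball (0:ℂ) 1 \ G := fun z hz => ⟨hball hz.1, hz.2⟩
      have hz0 : volume (f '' (ball (0:ℂ) r \ G)) = 0 :=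
        hN _ (fun z hz => hball hz.1) (measure_mono_null hsub hnull)
      calc volume (f '' (G ∩ ball (0:ℂ) r) ∪ f '' (ball (0:ℂ) r \ G))
          ≤ volume (f '' (G ∩ ball (0:ℂ) r)) + volume (f '' (ball (0:ℂ) r \ G)) :=
            measure_union_le _ _
        _ = volume (f '' (G ∩ ball (0:ℂ) r)) := by rw [hz0, add_zero]
    rw [h1, h2, h3, ← h4]
  set Φ : ℝ → ℝ≥0∞ := fun s => ∫⁻ θ in Ioo (0:ℝ) (2*π),
      ENNReal.ofReal s * ENNReal.ofReal (Jt (Complex.polarCoord.symm (s, θ))) with hΦdef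
  have hFprod : Measurable (fun q : ℝ × ℝ =>
      ENNReal.ofReal q.1 * ENNReal.ofReal (Jt (Complex.polarCoord.symm q))) :=
    measurable_fst.ennreal_ofReal.mul
      ((hJtmeas.comp continuous_CpolarSymm.measurable).ennreal_ofReal)
  have hΦmeas : Measurable Φ := by
    rw [hΦdef]
    exact Measurable.lintegral_prod_right' hFprod
  have hpolar : ∀ r : ℝ, 0 < r → r ≤ 1 →
      volume (f '' ball (0:ℂ) r) = ∫⁻ s in Ioo (0:ℝ) r, Φ s := by
    intro r hr0 hr1
    rw [harea r hr0 hr1,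
      lintegral_ball_polar (fun z => ENNReal.ofReal (Jt z)) hJtmeas.ennreal_ofReal hr0]
  have htot : ∫⁻ s in Ioo (0:ℝ) 1, Φ s ≠ ⊤ := by
    rw [← hpolar 1 one_pos le_rfl]
    refine ((measure_mono ?_).trans_lt (measure_ball_lt_top (x := (0:ℂ)) (r := 1))).ne
    rintro y ⟨z, hz, rfl⟩
    exact hmapsto z hz
  set ψ : ℝ → ℝ≥0∞ := (Ioo (0:ℝ) 1).indicator Φ with hψdef
  have hψmeas : Measurable ψ := hΦmeas.indicator measurableSet_Ioo
  have hψtot : ∫⁻ s, ψ s ≠ ⊤ := by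
    rw [hψdef, lintegral_indicator measurableSet_Ioo]; exact htot
  have hψae : ∀ᵐ s, ψ s ≠ ⊤ := (ae_lt_top hψmeas hψtot).mono fun s hs => hs.ne
  set w : ℝ → ℝ := fun s => (ψ s).toReal with hwdef
  have hwmeas : Measurable w := hψmeas.ennreal_toReal
  have hwnn : ∀ s, 0 ≤ w s := fun s => ENNReal.toReal_nonneg
  have hwint : Integrable w volume :=
    integrable_toReal_of_lintegral_ne_top hψmeas.aemeasurable hψtot
  have hofw : ∀ᵐ s, ENNReal.ofReal (w s) = ψ s :=
    hψae.mono fun s hs => by rw [hwdef]; exact ENNReal.ofReal_toReal hs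
  set H : ℝ → ℝ := fun u => ∫ s in Iic u, w s with hHdef
  have hH := primitive_hasDerivAt_ae w hwmeas hwnn hwint
  have hHarea : ∀ r ∈ Icc (0:ℝ) 1, H r = areaFn f r := by
    intro r hr
    have h1 : H r = (∫⁻ s in Iic r, ENNReal.ofReal (w s)).toReal :=
      integral_eq_lintegral_of_nonneg_ae (ae_of_all _ hwnn) hwmeas.aestronglyMeasurable
    have h2 : ∫⁻ s in Iic r, ENNReal.ofReal (w s) = ∫⁻ s in Iic r, ψ s :=
      lintegral_congr_ae (ae_restrict_of_ae hofw)
    have h3 : ∫⁻ s in Iic r, ψ s = ∫⁻ s in Ioo 0 1 ∩ Iic r, Φ s := by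
      rw [hψdef, lintegral_indicator measurableSet_Ioo,
        Measure.restrict_restrict measurableSet_Ioo]
    have h4 : ∫⁻ s in Ioo 0 1 ∩ Iic r, Φ s = ∫⁻ s in Ioo 0 r, Φ s := by
      refine setLIntegral_congr ?_
      have hne : ∀ᵐ s : ℝ, s ≠ r := by
        rw [ae_iff]
        have : {s : ℝ | ¬s ≠ r} = {r} := by ext; simp
        rw [this]
        exact measure_singleton r
      filter_upwards [hne] with s hs
      simp only [mem_inter_iff, mem_Ioo, mem_Iic, eq_iff_iff]
      constructor
      · rintro ⟨⟨ha, hb⟩, hc⟩; exact ⟨ha, lt_of_le_of_ne hc hs⟩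
      · rintro ⟨ha, hb⟩; exact ⟨⟨ha, lt_of_lt_of_le hb hr.2⟩, hb.le⟩
    rcases eq_or_lt_of_le hr.1 with h0 | h0
    · rw [h1, h2, h3, h4, ← h0]
      simp [areaFn]
    · rw [h1, h2, h3, h4, ← hpolar r h0 hr.2]
      rfl
  have hslice : ∀ᵐ r ∂(volume.restrict (Ioo (0:ℝ) 1)),
      ∀ᵐ θ ∂(volume.restrict (Ioo (0:ℝ) (2*π))), Complex.polarCoord.symm (r, θ) ∈ G := by
    set gb : ℂ → ℝ≥0∞ := (ball (0:ℂ) 1 \ G).indicator (fun _ => 1) with hgb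
    have hbadmeas : MeasurableSet (ball (0:ℂ) 1 \ G) := measurableSet_ball.diff hGmeas
    have hgbmeas : Measurable gb := measurable_const.indicator hbadmeas
    have h0 : ∫⁻ s in Ioo (0:ℝ) 1, ∫⁻ θ in Ioo (0:ℝ) (2*π),
        ENNReal.ofReal s * gb (Complex.polarCoord.symm (s, θ)) = 0 := by
      rw [← lintegral_ball_polar gb hgbmeas one_pos, hgb,
        lintegral_indicator hbadmeas, setLIntegral_one, Measure.restrict_apply hbadmeas]
      exact measure_mono_null inter_subset_left hnull
    have hinner_meas : Measurable fun s : ℝ => ∫⁻ θ in Ioo (0:ℝ) (2*π),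
        ENNReal.ofReal s * gb (Complex.polarCoord.symm (s, θ)) :=
      Measurable.lintegral_prod_right'
        (measurable_fst.ennreal_ofReal.mul (hgbmeas.comp continuous_CpolarSymm.measurable))
    have h1 := (lintegral_eq_zero_iff hinner_meas).mp h0
    filter_upwards [h1, ae_restrict_mem measurableSet_Ioo] with s hs hmem
    have hcs : Measurable fun θ : ℝ => gb (Complex.polarCoord.symm (s, θ)) :=
      hgbmeas.comp (continuous_CpolarSymm.comp (continuous_const.prodMk continuous_id)).measurable
    rw [Pi.zero_apply, lintegral_const_mul' _ _ ENNReal.ofReal_ne_top, mul_eq_zero] at hs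
    have hs0 : ENNReal.ofReal s ≠ 0 := by
      rw [Ne, ENNReal.ofReal_eq_zero, not_le]; exact hmem.1
    have h2 : ∫⁻ θ in Ioo (0:ℝ) (2*π), gb (Complex.polarCoord.symm (s, θ)) = 0 :=
      hs.resolve_left hs0
    have h3 := (lintegral_eq_zero_iff hcs).mp h2
    filter_upwards [h3] with θ hθ
    have hmem2 : Complex.polarCoord.symm (s, θ) ∈ ball (0:ℂ) 1 := by
      rw [mem_ball_zero_iff, abs_polar θ hmem.1.le]
      exact hmem.2
    by_contra hGc
    rw [Pi.zero_apply, hgb, Set.indicator_of_mem (show Complex.polarCoord.symm (s,θ) ∈ ball (0:ℂ) 1 \ G from ⟨hmem2, hGc⟩)] at hθ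
    exact one_ne_zero hθ
  have hΦfin : ∀ᵐ r ∂(volume.restrict (Ioo (0:ℝ) 1)), Φ r < ⊤ := ae_lt_top hΦmeas htot
  have main : ∀ᵐ r ∂(volume.restrict (Ioo (0:ℝ) 1)),
      deriv (areaFn f) r ≥
        curveLen f r ^ p / ((2 * Real.pi * r) ^ (p - 1) * dMean f p r) := by
    filter_upwards [ae_restrict_mem measurableSet_Ioo, ae_restrict_of_ae hH, hslice, hΦfin]
      with r hr hHr hsl hfin
    have hr0 : 0 < r := hr.1
    have heq : areaFn f =ᶠ[𝓝 r] H :=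
      Filter.eventuallyEq_of_mem (Icc_mem_nhds hr.1 hr.2) fun x hx => (hHarea x hx).symm
    rw [ge_iff_le, heq.deriv_eq, hHr.deriv]
    have hwr : w r = (Φ r).toReal := by
      simp only [hwdef, hψdef]
      rw [Set.indicator_of_mem hr]
    set cfun : ℝ → ℂ := fun θ => (r:ℂ) * Complex.exp (Complex.I * (θ:ℂ)) with hcfun
    have hcont_c : Continuous cfun := by
      rw [hcfun]; fun_prop
    have hcP : ∀ θ : ℝ, Complex.polarCoord.symm (r, θ) = cfun θ := fun θ => polar_symm_eq r θ
    have hslc : ∀ᵐ θ ∂(volume.restrict (Ioo (0:ℝ) (2*π))), cfun θ ∈ G := by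
      filter_upwards [hsl] with θ h; rwa [hcP] at h
    have habs_c : ∀ θ : ℝ, ‖cfun θ‖ = r := fun θ => by
      rw [← hcP, abs_polar θ hr0.le]
    set JL : ℝ≥0∞ := ∫⁻ θ in Ioo (0:ℝ) (2*π), ENNReal.ofReal (Jt (cfun θ)) with hJLdef
    have hΦr : Φ r = ENNReal.ofReal r * JL := by
      rw [hΦdef]
      simp only [hcP]
      exact lintegral_const_mul' _ _ ENNReal.ofReal_ne_top
    have hr0' : ENNReal.ofReal r ≠ 0 := by
      rw [Ne, ENNReal.ofReal_eq_zero, not_le]; exact hr0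
    have hJLne : JL ≠ ⊤ := by
      intro hcon
      rw [hΦr, hcon, ENNReal.mul_top hr0'] at hfin
      exact absurd hfin (lt_irrefl ⊤)
    set afun : ℝ → ℝ := fun θ => ‖angDeriv f (cfun θ)‖ with hafun
    set Dfn : ℝ → ℝ := fun θ => angDil f p (cfun θ) ^ (1/(p-1)) with hDfn
    have hLdef : curveLen f r = ∫ θ in (0:ℝ)..(2*π), afun θ := rfl
    have hmdef : dMean f p r = ((2*π)⁻¹ * ∫ θ in (0:ℝ)..(2*π), Dfn θ) ^ (p-1) := rfl
    set L : ℝ := curveLen f r with hLset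
    set m : ℝ := ∫ θ in (0:ℝ)..(2*π), Dfn θ with hmset
    set K : ℝ := (2 * Real.pi * r) ^ (p - 1) * dMean f p r with hKdef
    have hL0 : 0 ≤ L := by
      rw [hLdef]
      exact intervalIntegral.integral_nonneg (by positivity) fun u _ => norm_nonneg _
    rcases le_or_gt K 0 with hK | hK
    · have hle : L ^ p / K ≤ 0 :=
        div_nonpos_of_nonneg_of_nonpos (Real.rpow_nonneg hL0 p) hK
      have := hwnn r
      linarith
    rcases eq_or_lt_of_le hL0 with hL | hL
    · rw [← hL, Real.zero_rpow hp0.ne', zero_div]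
      exact hwnn r
    -- main case : 0 < L, 0 < K
    have h2π : (0:ℝ) ≤ 2*π := by positivity
    have hintA : IntervalIntegrable afun volume 0 (2*π) := by
      by_contra hcon
      rw [hLdef] at hL
      rw [intervalIntegral.integral_undef hcon] at hL
      exact lt_irrefl 0 hL
    have hIoA : IntegrableOn afun (Ioo 0 (2*π)) volume :=
      ((intervalIntegrable_iff_integrableOn_Ioc_of_le h2π).mp hintA).mono_set Ioo_subset_Ioc_self
    have hLoo : L = ∫ θ in Ioo (0:ℝ) (2*π), afun θ := by
      rw [hLdef, intervalIntegral.integral_of_le h2π]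
      exact (setIntegral_congr_set Ioo_ae_eq_Ioc).symm
    have hALofReal : ENNReal.ofReal L = ∫⁻ θ in Ioo (0:ℝ) (2*π), ENNReal.ofReal (afun θ) := by
      rw [hLoo]
      exact ofReal_integral_eq_lintegral_ofReal hIoA (ae_of_all _ fun θ => norm_nonneg _)
    -- Hölder
    set q : ℝ := p / (p - 1) with hqv
    have hpq : p.HolderConjugate q := Real.HolderConjugate.conjExponent hp
    have hq0 : 0 < q := hpq.symm.pos
    set Ff : ℝ → ℝ≥0∞ := fun θ => ENNReal.ofReal (r ^ p * Jt (cfun θ)) ^ (1/p) with hFf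
    set Gf : ℝ → ℝ≥0∞ := fun θ => ENNReal.ofReal (angDil f p (cfun θ)) ^ (1/p) with hGf
    have hangm : Measurable fun z => angDil f p z := by
      have h1 : Measurable fun z : ℂ => ‖angDeriv f z‖ ^ p :=
        (continuous_norm.measurable.comp (measurable_angDeriv' f)).pow measurable_const
      have h2 : Measurable fun z : ℂ => ‖z‖ ^ p * jacobian f z :=
        (continuous_norm.measurable.pow measurable_const).mul (measurable_jacobian' f)
      exact h1.div h2
    have hFfm : Measurable Ff := by
      rw [hFf]
      exact ((measurable_const.mul (hJtmeas.comp hcont_c.measurable)).ennreal_ofReal).pow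
        measurable_const
    have hGfm : Measurable Gf := by
      rw [hGf]
      exact ((hangm.comp hcont_c.measurable).ennreal_ofReal).pow measurable_const
    have hHo := ENNReal.lintegral_mul_le_Lp_mul_Lq (volume.restrict (Ioo (0:ℝ) (2*π))) hpq
      hFfm.aemeasurable hGfm.aemeasurable
    have hFG : ∀ᵐ θ ∂(volume.restrict (Ioo (0:ℝ) (2*π))),
        (Ff * Gf) θ = ENNReal.ofReal (afun θ) := by
      filter_upwards [hslc] with θ hθ
      have hJpos : 0 < jacobian f (cfun θ) := hθ.2.2
      have hJt_eq : Jt (cfun θ) = jacobian f (cfun θ) := by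
        rw [hJt]; exact Set.indicator_of_mem hθ _
      have hrp : (0:ℝ) < r ^ p := Real.rpow_pos_of_pos hr0 p
      have hden : 0 < r ^ p * jacobian f (cfun θ) := mul_pos hrp hJpos
      have hang : angDil f p (cfun θ) = afun θ ^ p / (r ^ p * jacobian f (cfun θ)) := by
        rw [hafun]
        simp only [angDil]
        rw [habs_c θ]
      have key : (r ^ p * Jt (cfun θ)) * angDil f p (cfun θ) = afun θ ^ p := by
        rw [hJt_eq, hang, mul_div_cancel₀ _ hden.ne']
      show Ff θ * Gf θ = _
      rw [hFf, hGf]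
      simp only
      rw [← ENNReal.mul_rpow_of_nonneg _ _ (by positivity : (0:ℝ) ≤ 1/p),
        ← ENNReal.ofReal_mul (mul_nonneg (Real.rpow_nonneg hr0.le p) (hJtnn _)), key,
        ← ENNReal.ofReal_rpow_of_nonneg (norm_nonneg _) hp0.le,
        ← ENNReal.rpow_mul, mul_one_div_cancel hp0.ne', ENNReal.rpow_one]
    have hLHS : ∫⁻ θ in Ioo (0:ℝ) (2*π), (Ff * Gf) θ = ENNReal.ofReal L := by
      rw [lintegral_congr_ae hFG, ← hALofReal]
    have hFp : ∫⁻ θ in Ioo (0:ℝ) (2*π), Ff θ ^ p = ENNReal.ofReal (r ^ p) * JL := by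
      have hptw : ∀ θ, Ff θ ^ p = ENNReal.ofReal (r ^ p) * ENNReal.ofReal (Jt (cfun θ)) := by
        intro θ
        rw [hFf]
        simp only
        rw [← ENNReal.rpow_mul, one_div_mul_cancel hp0.ne', ENNReal.rpow_one,
          ENNReal.ofReal_mul (Real.rpow_nonneg hr0.le p)]
      simp_rw [hptw]
      rw [lintegral_const_mul' _ _ ENNReal.ofReal_ne_top, hJLdef]
    have hexpq : 1/p * q = 1/(p-1) := by
      rw [hqv]; field_simp
    have hGq : ∫⁻ θ in Ioo (0:ℝ) (2*π), Gf θ ^ q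
        = ∫⁻ θ in Ioo (0:ℝ) (2*π), ENNReal.ofReal (Dfn θ) := by
      refine lintegral_congr_ae ?_
      filter_upwards [hslc] with θ hθ
      have hJpos : 0 < jacobian f (cfun θ) := hθ.2.2
      have hDnn : 0 ≤ angDil f p (cfun θ) := by
        simp only [angDil]
        apply div_nonneg (Real.rpow_nonneg (norm_nonneg _) p)
        rw [habs_c θ]
        exact (mul_pos (Real.rpow_pos_of_pos hr0 p) hJpos).le
      have hppos : (0:ℝ) ≤ 1/(p-1) := le_of_lt (one_div_pos.mpr (sub_pos.mpr hp))
      rw [hGf]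
      simp only
      rw [← ENNReal.rpow_mul, hexpq, ENNReal.ofReal_rpow_of_nonneg hDnn hppos, hDfn]
    by_cases hDint : IntervalIntegrable Dfn volume 0 (2*π)
    case neg =>
      exfalso
      have hm0 : m = 0 := by rw [hmset]; exact intervalIntegral.integral_undef hDint
      rw [hKdef, hmdef, hm0, mul_zero, Real.zero_rpow hp1, mul_zero] at hK
      exact lt_irrefl 0 hK
    have hIoD : IntegrableOn Dfn (Ioo 0 (2*π)) volume :=
      ((intervalIntegrable_iff_integrableOn_Ioc_of_le h2π).mp hDint).mono_set Ioo_subset_Ioc_self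
    have hmIoo : m = ∫ θ in Ioo (0:ℝ) (2*π), Dfn θ := by
      rw [hmset, intervalIntegral.integral_of_le h2π]
      exact (setIntegral_congr_set Ioo_ae_eq_Ioc).symm
    have hDnn_ae : ∀ᵐ θ ∂(volume.restrict (Ioo (0:ℝ) (2*π))), 0 ≤ Dfn θ := by
      filter_upwards [hslc] with θ hθ
      rw [hDfn]
      exact Real.rpow_nonneg (by
        simp only [angDil]
        apply div_nonneg (Real.rpow_nonneg (norm_nonneg _) p)
        rw [habs_c θ]
        exact (mul_pos (Real.rpow_pos_of_pos hr0 p) hθ.2.2).le) _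
    have hm_nn : 0 ≤ m := hmIoo ▸ integral_nonneg_of_ae hDnn_ae
    have hDL : ∫⁻ θ in Ioo (0:ℝ) (2*π), ENNReal.ofReal (Dfn θ) = ENNReal.ofReal m := by
      rw [hmIoo]
      exact (ofReal_integral_eq_lintegral_ofReal hIoD hDnn_ae).symm
    rw [hLHS, hFp, hGq, hDL] at hHo
    have hne1 : (ENNReal.ofReal (r ^ p) * JL) ^ (1/p) ≠ ⊤ :=
      ENNReal.rpow_ne_top_of_nonneg (by positivity)
        (ENNReal.mul_ne_top ENNReal.ofReal_ne_top hJLne)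
    have hne2 : (ENNReal.ofReal m) ^ (1/q) ≠ ⊤ :=
      ENNReal.rpow_ne_top_of_nonneg (by positivity) ENNReal.ofReal_ne_top
    set JLt : ℝ := JL.toReal with hJLt
    have hJLt_nn : 0 ≤ JLt := ENNReal.toReal_nonneg
    have hLle : L ≤ (r ^ p * JLt) ^ (1/p) * m ^ (1/q) := by
      have hmono := ENNReal.toReal_mono (ENNReal.mul_ne_top hne1 hne2) hHo
      rw [ENNReal.toReal_ofReal hL0, ENNReal.toReal_mul, ← ENNReal.toReal_rpow,
        ← ENNReal.toReal_rpow, ENNReal.toReal_mul, ENNReal.toReal_ofReal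
        (Real.rpow_nonneg hr0.le p), ENNReal.toReal_ofReal hm_nn] at hmono
      exact hmono
    have hwr' : w r = r * JLt := by
      rw [hwr, hΦr, ENNReal.toReal_mul, ENNReal.toReal_ofReal hr0.le, hJLt]
    rw [hwr', div_le_iff₀ hK]
    have hLp : L ^ p ≤ (r ^ p * JLt) * m ^ (p-1) := by
      have h1q : 1/q * p = p - 1 := by rw [hqv]; field_simp
      calc L ^ p ≤ ((r ^ p * JLt) ^ (1/p) * m ^ (1/q)) ^ p :=
            Real.rpow_le_rpow hL0 hLle hp0.le
        _ = (r ^ p * JLt) * m ^ (p-1) := by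
            rw [Real.mul_rpow (Real.rpow_nonneg (by positivity) _) (Real.rpow_nonneg hm_nn _),
              ← Real.rpow_mul (by positivity : (0:ℝ) ≤ r ^ p * JLt),
              ← Real.rpow_mul hm_nn, one_div_mul_cancel hp0.ne', h1q, Real.rpow_one]
    refine hLp.trans (le_of_eq ?_)
    rw [hKdef, hmdef]
    have h2 : ((2*π)⁻¹ * m) ^ (p-1) = ((2*π)⁻¹)^(p-1) * m^(p-1) :=
      Real.mul_rpow (by positivity) hm_nn
    have h3 : (2*Real.pi*r)^(p-1) = (2*π)^(p-1) * r^(p-1) :=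
      Real.mul_rpow (by positivity) hr0.le
    have h4 : (2*π)^(p-1) * ((2*π)⁻¹)^(p-1) = 1 := by
      rw [← Real.mul_rpow (by positivity) (by positivity), mul_inv_cancel₀ (by positivity),
        Real.one_rpow]
    have h5 : r ^ p = r * r ^ (p-1) := by
      nth_rewrite 1 [show p = 1 + (p-1) by ring]
      rw [Real.rpow_add hr0, Real.rpow_one]
    rw [h2, h3, h5]
    linear_combination (-(r * JLt * r^(p-1) * m^(p-1))) * h4
  rwa [ae_restrict_congr_set Ioo_ae_eq_Icc] at main
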